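/- The set of points x ∈ Λ_{2m+1} with ‖x − u‖ ≤ √(4m+1) / 4 equals C_int ∪ C_half; moreover every point of C_int ∪ C_half is at distance exactly √(4m+1) / 4 from u, and C_int ∪ C_half has exactly 2^(m+1) elements. -/

import Mathlib

open Finset

lemma stmt4_int_ne_half (n q : ℤ) : (n : ℝ) ≠ (q : ℝ) + 1/2 := by
  intro h
  have h2 : ((2*n : ℤ) : ℝ) = ((2*q+1 : ℤ) : ℝ) := by push_cast; linarith
  have := Int.cast_injective (α := ℝ) h2
  omega

lemma stmt4_half_abs {a : ℝ} (t : ℤ) (h : a = (2*(t:ℝ)+1)/2) : 1/2 ≤ |a| := by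
  have h1 : (1:ℤ) ≤ |2*t+1| := Int.one_le_abs (by omega)
  have h2 : (1:ℝ) ≤ |2*(t:ℝ)+1| := by exact_mod_cast h1
  rw [h, abs_div, show |(2:ℝ)| = 2 by norm_num]
  linarith

lemma stmt4_quarter_abs {a : ℝ} (t : ℤ) (h : a = (2*(t:ℝ)+1)/4) : 1/4 ≤ |a| := by
  have h1 : (1:ℤ) ≤ |2*t+1| := Int.one_le_abs (by omega)
  have h2 : (1:ℝ) ≤ |2*(t:ℝ)+1| := by exact_mod_cast h1
  rw [h, abs_div, show |(4:ℝ)| = 4 by norm_num]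
  linarith

lemma stmt4_sum_split {n : ℕ} (j : Fin n) (A B : Finset (Fin n))
    (hAB : Disjoint A B) (hU : A ∪ B = Finset.univ \ {j}) (f : Fin n → ℝ) :
    ∑ i, f i = ∑ i ∈ A, f i + ∑ i ∈ B, f i + f j := by
  rw [Finset.sum_eq_sum_sdiff_singleton_add (Finset.mem_univ j) f, ← hU,
    Finset.sum_union hAB]

lemma stmt4_main_case {n m : ℕ} (j : Fin n) (A B : Finset (Fin n))
    (hAB : Disjoint A B) (hA : A.card = m) (hU : A ∪ B = Finset.univ \ {j})
    (y : Fin n → ℝ)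
    (hyA : ∀ i ∈ A, ∃ t : ℤ, y i = (2*(t:ℝ)+1)/2)
    (hyB : ∀ i ∈ B, ∃ t : ℤ, y i = (t:ℝ))
    (hyj : ∃ t : ℤ, y j = (2*(t:ℝ)+1)/4)
    (hsum : ∑ i, (y i)^2 ≤ (4*m+1)/16) :
    (∀ i ∈ B, y i = 0) ∧ (∀ i ∈ A, |y i| = 1/2) ∧ |y j| = 1/4 := by
  have hjA : j ∉ A := by
    intro h
    have : j ∈ A ∪ B := Finset.mem_union_left _ h
    rw [hU] at this; simp at this
  have hBj : ∀ i ∈ B, i ≠ j := by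
    intro i hi
    have : i ∈ A ∪ B := Finset.mem_union_right _ hi
    rw [hU] at this; simp at this; exact this
  set g : Fin n → ℝ := fun i => if i ∈ A then 1/4 else if i = j then 1/16 else 0 with hg
  have hgA : ∀ i ∈ A, g i = 1/4 := fun i hi => by simp [hg, hi]
  have hgB : ∀ i ∈ B, g i = 0 := fun i hi => by
    simp [hg, Finset.disjoint_right.mp hAB hi, hBj i hi]
  have hgj : g j = 1/16 := by simp [hg, hjA]
  have hle : ∀ i ∈ Finset.univ, g i ≤ (y i)^2 := by
    intro i _
    by_cases hiA : i ∈ A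
    · obtain ⟨t, ht⟩ := hyA i hiA
      have := stmt4_half_abs t ht
      rw [hgA i hiA]
      nlinarith [sq_abs (y i)]
    · by_cases hij : i = j
      · obtain ⟨t, ht⟩ := hyj
        have := stmt4_quarter_abs t ht
        rw [hij, hgj]
        nlinarith [sq_abs (y j)]
      · simp only [hg, if_neg hiA, if_neg hij]
        positivity
  have hgsum : ∑ i, g i = (4*(m:ℝ)+1)/16 := by
    rw [stmt4_sum_split j A B hAB hU g]
    have e1 : ∑ i ∈ A, g i = ∑ _i ∈ A, (1/4:ℝ) := Finset.sum_congr rfl hgA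
    have e2 : ∑ i ∈ B, g i = 0 := Finset.sum_eq_zero hgB
    rw [e1, e2, hgj, Finset.sum_const, hA, nsmul_eq_mul]; ring
  have heq : ∀ i ∈ Finset.univ, g i = (y i)^2 := by
    rw [← Finset.sum_eq_sum_iff_of_le hle]
    have h1 : ∑ i, g i ≤ ∑ i, (y i)^2 := Finset.sum_le_sum hle
    rw [hgsum] at h1 ⊢
    linarith
  refine ⟨?_, ?_, ?_⟩
  · intro i hi
    have h := (heq i (Finset.mem_univ i)).symm
    rw [hgB i hi] at h
    exact pow_eq_zero_iff (n := 2) (by norm_num) |>.mp h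
  · intro i hi
    have h := (heq i (Finset.mem_univ i)).symm
    rw [hgA i hi] at h
    have h' : (y i - 1/2) * (y i + 1/2) = 0 := by linear_combination h
    rcases mul_eq_zero.mp h' with h'' | h''
    · rw [abs_of_nonneg (by linarith)]; linarith
    · rw [abs_of_nonpos (by linarith)]; linarith
  · have h := (heq j (Finset.mem_univ j)).symm
    rw [hgj] at h
    have h' : (y j - 1/4) * (y j + 1/4) = 0 := by linear_combination h
    rcases mul_eq_zero.mp h' with h'' | h''
    · rw [abs_of_nonneg (by linarith)]; linarith
    · rw [abs_of_nonpos (by linarith)]; linarith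

lemma stmt4_dist_exact {n m : ℕ} (j : Fin n) (A B : Finset (Fin n))
    (hAB : Disjoint A B) (hA : A.card = m) (hU : A ∪ B = Finset.univ \ {j})
    (y : Fin n → ℝ)
    (h1 : ∀ i ∈ B, y i = 0) (h2 : ∀ i ∈ A, |y i| = 1/2) (h3 : |y j| = 1/4) :
    ∑ i, (y i)^2 = (4*(m:ℝ)+1)/16 := by
  rw [stmt4_sum_split j A B hAB hU]
  have e1 : ∑ i ∈ A, (y i)^2 = ∑ _i ∈ A, (1/4:ℝ) :=
    Finset.sum_congr rfl fun i hi => by rw [← sq_abs, h2 i hi]; norm_num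
  have e2 : ∑ i ∈ B, (y i)^2 = 0 :=
    Finset.sum_eq_zero fun i hi => by rw [h1 i hi]; ring
  have e3 : (y j)^2 = 1/16 := by rw [← sq_abs, h3]; norm_num
  rw [e1, e2, e3, Finset.sum_const, hA, nsmul_eq_mul]; ring
lemma stmt4_int_ne_half' (n q : ℤ) : (n : ℝ) ≠ (q : ℝ) + 1/2 := by
  intro h
  have h2 : ((2*n : ℤ) : ℝ) = ((2*q+1 : ℤ) : ℝ) := by push_cast; linarith
  have := Int.cast_injective (α := ℝ) h2
  omega

lemma stmt4_exists_c (v : ℝ) (k : ℤ) (hv : v = 1/4 + (k:ℝ)/2) (δ : ℝ)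
    (hδ : δ = 0 ∨ δ = 1/2) :
    ∃ c : ℝ, (∃ n : ℤ, c = (n:ℝ) + δ) ∧ |c - v| = 1/4 ∧
      ∀ a : ℝ, (∃ n : ℤ, a = (n:ℝ) + δ) → |a - v| = 1/4 → a = c := by
  have habs : ∀ a : ℝ, |a - v| = 1/4 → a = v - 1/4 ∨ a = v + 1/4 := by
    intro a ha
    rcases (abs_eq (by norm_num : (0:ℝ) ≤ 1/4)).mp ha with h | h
    · right; linarith
    · left; linarith
  rcases Int.even_or_odd k with ⟨q, hq⟩ | ⟨q, hq⟩
  · have hqr : (k:ℝ) = q + q := by exact_mod_cast hq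
    rcases hδ with rfl | rfl
    · refine ⟨v - 1/4, ⟨q, by push_cast; linarith⟩,
        by rw [abs_of_nonpos] <;> linarith, ?_⟩
      intro a ⟨n, hn⟩ ha
      rcases habs a ha with h | h
      · exact h
      · exact absurd (by push_cast at hn ⊢; linarith : (n:ℝ) = (q:ℝ) + 1/2)
          (stmt4_int_ne_half' n q)
    · refine ⟨v + 1/4, ⟨q, by push_cast; linarith⟩,
        by rw [abs_of_nonneg] <;> linarith, ?_⟩
      intro a ⟨n, hn⟩ ha
      rcases habs a ha with h | h
      · exact absurd (by push_cast at hn ⊢; linarith : ((q:ℝ)) = (n:ℝ) + 1/2)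
          (stmt4_int_ne_half' q n)
      · exact h
  · have hqr : (k:ℝ) = 2*q + 1 := by exact_mod_cast hq
    rcases hδ with rfl | rfl
    · refine ⟨v + 1/4, ⟨q + 1, by push_cast; linarith⟩,
        by rw [abs_of_nonneg] <;> linarith, ?_⟩
      intro a ⟨n, hn⟩ ha
      rcases habs a ha with h | h
      · exact absurd (by push_cast at hn ⊢; linarith : (n:ℝ) = (q:ℝ) + 1/2)
          (stmt4_int_ne_half' n q)
      · exact h
    · refine ⟨v - 1/4, ⟨q, by push_cast; linarith⟩,
        by rw [abs_of_nonpos] <;> linarith, ?_⟩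
      intro a ⟨n, hn⟩ ha
      rcases habs a ha with h | h
      · exact h
      · exact absurd (by push_cast at hn ⊢; linarith : ((q+1:ℤ):ℝ) = (n:ℝ) + 1/2)
          (stmt4_int_ne_half' (q+1) n)

noncomputable def stmt4Phi {n : ℕ} (A : Finset (Fin n)) (j : Fin n)
    (u : EuclideanSpace ℝ (Fin n)) (c : ℝ)
    (ε : {i : Fin n // i ∈ A} → Bool) : EuclideanSpace ℝ (Fin n) :=
  WithLp.toLp 2 (fun i => if h : i ∈ A then u i + (if ε ⟨i, h⟩ then 1/2 else -1/2)
    else if i = j then c else u i)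

lemma stmt4_card_piece {n m : ℕ} (j : Fin n) (A B : Finset (Fin n))
    (hAB : Disjoint A B) (hA : A.card = m) (hU : A ∪ B = Finset.univ \ {j})
    (u : EuclideanSpace ℝ (Fin n)) (c : ℝ) :
    Set.ncard {x : EuclideanSpace ℝ (Fin n) |
      (∀ i ∈ B, x i = u i) ∧ (∀ i ∈ A, |x i - u i| = 1/2) ∧ x j = c} = 2^m := by
  have hjA : j ∉ A := by
    intro h
    have : j ∈ A ∪ B := Finset.mem_union_left _ h
    rw [hU] at this; simp at this
  have hBj : ∀ i ∈ B, i ≠ j := by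
    intro i hi
    have : i ∈ A ∪ B := Finset.mem_union_right _ hi
    rw [hU] at this; simp at this; exact this
  have htri : ∀ i : Fin n, i ∉ A → i ≠ j → i ∈ B := by
    intro i h1 h2
    have : i ∈ A ∪ B := by rw [hU]; simp [h2]
    rcases Finset.mem_union.mp this with h | h
    · exact absurd h h1
    · exact h
  have hΦA : ∀ ε (i : Fin n) (h : i ∈ A),
      stmt4Phi A j u c ε i = u i + (if ε ⟨i, h⟩ then 1/2 else -1/2) := by
    intro ε i h; simp [stmt4Phi, h]
  have hΦB : ∀ ε (i : Fin n), i ∈ B → stmt4Phi A j u c ε i = u i := by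
    intro ε i h
    simp [stmt4Phi, Finset.disjoint_right.mp hAB h, hBj i h]
  have hΦj : ∀ ε, stmt4Phi A j u c ε j = c := by intro ε; simp [stmt4Phi, hjA]
  have hset : {x : EuclideanSpace ℝ (Fin n) |
      (∀ i ∈ B, x i = u i) ∧ (∀ i ∈ A, |x i - u i| = 1/2) ∧ x j = c}
      = Set.range (stmt4Phi A j u c) := by
    ext x
    constructor
    · rintro ⟨h1, h2, h3⟩
      refine ⟨fun i => decide (x i.1 = u i.1 + 1/2), ?_⟩
      ext i
      by_cases hiA : i ∈ A
      · rw [hΦA _ i hiA]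
        rcases (abs_eq (by norm_num : (0:ℝ) ≤ 1/2)).mp (h2 i hiA) with h | h
        · simp only [decide_eq_true_eq]
          rw [if_pos (by linarith)]
          linarith
        · simp only [decide_eq_true_eq]
          rw [if_neg (by intro hc; linarith)]
          linarith
      · by_cases hij : i = j
        · rw [hij, hΦj]; exact h3.symm
        · rw [hΦB _ i (htri i hiA hij)]; exact (h1 i (htri i hiA hij)).symm
    · rintro ⟨ε, rfl⟩
      refine ⟨fun i hi => hΦB ε i hi, fun i hi => ?_, hΦj ε⟩
      rw [hΦA ε i hi]
      rcases Bool.eq_false_or_eq_true (ε ⟨i, hi⟩) with h | h <;> rw [h] <;> norm_num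
  have hinj : Function.Injective (stmt4Phi A j u c) := by
    intro ε ε' h
    funext i
    have hi := i.2
    have hii : stmt4Phi A j u c ε i.1 = stmt4Phi A j u c ε' i.1 := by rw [h]
    rw [hΦA ε i.1 hi, hΦA ε' i.1 hi] at hii
    rcases Bool.eq_false_or_eq_true (ε ⟨i.1, hi⟩) with h1 | h1 <;>
      rcases Bool.eq_false_or_eq_true (ε' ⟨i.1, hi⟩) with h2 | h2 <;>
      simp only [Subtype.coe_eta] at h1 h2 <;>
      rw [h1, h2] <;> rw [h1, h2] at hii <;> norm_num at hii
  rw [hset, ← Nat.card_coe_set_eq, Nat.card_range_of_injective hinj,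
    Nat.card_eq_fintype_card, Fintype.card_fun, Fintype.card_bool, Fintype.card_coe, hA]
theorem stmt_4 (m : ℕ) (hm : 1 ≤ m)
    (Λ : Set (EuclideanSpace ℝ (Fin (2 * m + 1))))
    (hΛ : Λ = {x : EuclideanSpace ℝ (Fin (2 * m + 1)) |
      (∀ i, ∃ k : ℤ, x i = (k : ℝ)) ∨ (∀ i, ∃ k : ℤ, x i = (k : ℝ) + 1/2)})
    (j : Fin (2 * m + 1))
    (S I : Finset (Fin (2 * m + 1)))
    (hSI : Disjoint S I) (hS : S.card = m) (hI : I.card = m)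
    (hU : S ∪ I = Finset.univ \ {j})
    (u : EuclideanSpace ℝ (Fin (2 * m + 1)))
    (huS : ∀ i ∈ S, ∃ k : ℤ, u i = (k : ℝ) + 1/2)
    (huI : ∀ i ∈ I, ∃ k : ℤ, u i = (k : ℝ))
    (huj : ∃ k : ℤ, u j = 1/4 + (k : ℝ) / 2)
    (Chalf Cint : Set (EuclideanSpace ℝ (Fin (2 * m + 1))))
    (hChalf : Chalf = {x : EuclideanSpace ℝ (Fin (2 * m + 1)) |
      (∀ i ∈ S, x i = u i) ∧ (∀ i ∈ I, |x i - u i| = 1/2) ∧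
      (∃ k : ℤ, x j = (k : ℝ) + 1/2) ∧ |x j - u j| = 1/4})
    (hCint : Cint = {x : EuclideanSpace ℝ (Fin (2 * m + 1)) |
      (∀ i ∈ I, x i = u i) ∧ (∀ i ∈ S, |x i - u i| = 1/2) ∧
      (∃ k : ℤ, x j = (k : ℝ)) ∧ |x j - u j| = 1/4}) :
    {x ∈ Λ | ‖x - u‖ ≤ Real.sqrt (4 * m + 1) / 4} = Cint ∪ Chalf ∧
    (∀ x ∈ Cint ∪ Chalf, dist x u = Real.sqrt (4 * m + 1) / 4) ∧
    (Cint ∪ Chalf).ncard = 2 ^ (m + 1) := by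
  obtain ⟨kj, hkj⟩ := huj
  have hU' : I ∪ S = Finset.univ \ {j} := by rw [Finset.union_comm]; exact hU
  have hjS : j ∉ S := by
    intro h
    have : j ∈ S ∪ I := Finset.mem_union_left _ h
    rw [hU] at this; simp at this
  have hjI : j ∉ I := by
    intro h
    have : j ∈ S ∪ I := Finset.mem_union_right _ h
    rw [hU] at this; simp at this
  have htriS : ∀ i : Fin (2*m+1), i ∉ S → i ≠ j → i ∈ I := by
    intro i h1 h2
    have : i ∈ S ∪ I := by rw [hU]; simp [h2]
    rcases Finset.mem_union.mp this with h | h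
    · exact absurd h h1
    · exact h
  have htriI : ∀ i : Fin (2*m+1), i ∉ I → i ≠ j → i ∈ S := by
    intro i h1 h2
    have : i ∈ S ∪ I := by rw [hU]; simp [h2]
    rcases Finset.mem_union.mp this with h | h
    · exact h
    · exact absurd h h1
  have hnorm : ∀ x : EuclideanSpace ℝ (Fin (2*m+1)),
      ‖x - u‖ = Real.sqrt (∑ i, (x i - u i)^2) := by
    intro x
    rw [EuclideanSpace.norm_eq]
    congr 1
    exact Finset.sum_congr rfl fun i _ => by
      rw [PiLp.sub_apply, Real.norm_eq_abs, sq_abs]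
  have h16 : Real.sqrt ((4*(m:ℝ)+1)/16) = Real.sqrt (4*(m:ℝ)+1) / 4 := by
    rw [Real.sqrt_div (by positivity) 16, show (16:ℝ) = 4^2 by norm_num,
      Real.sqrt_sq (by norm_num : (0:ℝ) ≤ 4)]
  -- exact distance for members
  have hdist : ∀ x, x ∈ Cint ∪ Chalf → ‖x - u‖ = Real.sqrt (4*(m:ℝ)+1) / 4 := by
    intro x hx
    rw [hnorm x, ← h16]
    congr 1
    rcases hx with hx | hx
    · rw [hCint] at hx
      obtain ⟨h1, h2, _, h4⟩ := hx
      exact stmt4_dist_exact j S I hSI hS hU (fun i => x i - u i)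
        (fun i hi => by show x i - u i = 0; rw [h1 i hi]; ring) h2 h4
    · rw [hChalf] at hx
      obtain ⟨h1, h2, _, h4⟩ := hx
      exact stmt4_dist_exact j I S hSI.symm hI hU' (fun i => x i - u i)
        (fun i hi => by show x i - u i = 0; rw [h1 i hi]; ring) h2 h4
  refine ⟨?_, ?_, ?_⟩
  · -- set equality
    ext x
    simp only [Set.mem_setOf_eq, Set.mem_union]
    constructor
    · rintro ⟨hxΛ, hxle⟩
      rw [hΛ] at hxΛ
      have hsum : ∑ i, (x i - u i)^2 ≤ (4*(m:ℝ)+1)/16 := by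
        have h2 : ‖x - u‖^2 ≤ (Real.sqrt (4*(m:ℝ)+1)/4)^2 :=
          pow_le_pow_left₀ (norm_nonneg _) hxle 2
        rw [hnorm x, Real.sq_sqrt (Finset.sum_nonneg fun i _ => sq_nonneg _)] at h2
        calc ∑ i, (x i - u i)^2 ≤ (Real.sqrt (4*(m:ℝ)+1)/4)^2 := h2
          _ = (4*(m:ℝ)+1)/16 := by
              rw [div_pow, Real.sq_sqrt (by positivity)]; norm_num
      rcases hxΛ with hint | hhalf
      · left
        have hyA : ∀ i ∈ S, ∃ t : ℤ, x i - u i = (2*(t:ℝ)+1)/2 := by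
          intro i hi
          obtain ⟨a, ha⟩ := hint i
          obtain ⟨b, hb⟩ := huS i hi
          exact ⟨a - b - 1, by rw [ha, hb]; push_cast; ring⟩
        have hyB : ∀ i ∈ I, ∃ t : ℤ, x i - u i = (t:ℝ) := by
          intro i hi
          obtain ⟨a, ha⟩ := hint i
          obtain ⟨b, hb⟩ := huI i hi
          exact ⟨a - b, by rw [ha, hb]; push_cast; ring⟩
        have hyj : ∃ t : ℤ, x j - u j = (2*(t:ℝ)+1)/4 := by
          obtain ⟨a, ha⟩ := hint j
          exact ⟨2*a - kj - 1, by rw [ha, hkj]; push_cast; ring⟩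
        obtain ⟨hB0, hAh, hjq⟩ :=
          stmt4_main_case j S I hSI hS hU (fun i => x i - u i) hyA hyB hyj hsum
        rw [hCint]
        exact ⟨fun i hi => sub_eq_zero.mp (hB0 i hi), hAh, hint j, hjq⟩
      · right
        have hyA : ∀ i ∈ I, ∃ t : ℤ, x i - u i = (2*(t:ℝ)+1)/2 := by
          intro i hi
          obtain ⟨a, ha⟩ := hhalf i
          obtain ⟨b, hb⟩ := huI i hi
          exact ⟨a - b, by rw [ha, hb]; push_cast; ring⟩
        have hyB : ∀ i ∈ S, ∃ t : ℤ, x i - u i = (t:ℝ) := by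
          intro i hi
          obtain ⟨a, ha⟩ := hhalf i
          obtain ⟨b, hb⟩ := huS i hi
          exact ⟨a - b, by rw [ha, hb]; push_cast; ring⟩
        have hyj : ∃ t : ℤ, x j - u j = (2*(t:ℝ)+1)/4 := by
          obtain ⟨a, ha⟩ := hhalf j
          exact ⟨2*a - kj, by rw [ha, hkj]; push_cast; ring⟩
        obtain ⟨hB0, hAh, hjq⟩ :=
          stmt4_main_case j I S hSI.symm hI hU' (fun i => x i - u i) hyA hyB hyj hsum
        rw [hChalf]
        exact ⟨fun i hi => sub_eq_zero.mp (hB0 i hi), hAh, hhalf j, hjq⟩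
    · intro hx
      have hxu : x ∈ Cint ∪ Chalf := hx
      refine ⟨?_, le_of_eq (hdist x hxu)⟩
      rw [hΛ]
      rcases hx with hx | hx
      · rw [hCint] at hx
        obtain ⟨h1, h2, h3, _⟩ := hx
        left
        intro i
        by_cases hiS : i ∈ S
        · obtain ⟨b, hb⟩ := huS i hiS
          rcases (abs_eq (by norm_num : (0:ℝ) ≤ 1/2)).mp (h2 i hiS) with h | h
          · exact ⟨b + 1, by rw [hb] at h; push_cast; linarith⟩
          · exact ⟨b, by rw [hb] at h; push_cast; linarith⟩
        · by_cases hij : i = j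
          · obtain ⟨a, ha⟩ := h3
            exact ⟨a, by rw [hij]; exact ha⟩
          · obtain ⟨b, hb⟩ := huI i (htriS i hiS hij)
            exact ⟨b, by rw [h1 i (htriS i hiS hij)]; exact hb⟩
      · rw [hChalf] at hx
        obtain ⟨h1, h2, h3, _⟩ := hx
        right
        intro i
        by_cases hiI : i ∈ I
        · obtain ⟨b, hb⟩ := huI i hiI
          rcases (abs_eq (by norm_num : (0:ℝ) ≤ 1/2)).mp (h2 i hiI) with h | h
          · exact ⟨b, by rw [hb] at h; push_cast; linarith⟩
          · exact ⟨b - 1, by rw [hb] at h; push_cast; linarith⟩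
        · by_cases hij : i = j
          · obtain ⟨a, ha⟩ := h3
            exact ⟨a, by rw [hij]; exact ha⟩
          · obtain ⟨b, hb⟩ := huS i (htriI i hiI hij)
            exact ⟨b, by rw [h1 i (htriI i hiI hij)]; exact hb⟩
  · -- exact distance
    intro x hx
    rw [dist_eq_norm]
    exact hdist x hx
  · -- cardinality
    obtain ⟨c₀, ⟨n₀, hc₀n⟩, hc₀d, hc₀u⟩ := stmt4_exists_c (u j) kj hkj 0 (Or.inl rfl)
    obtain ⟨c₁, ⟨n₁, hc₁n⟩, hc₁d, hc₁u⟩ := stmt4_exists_c (u j) kj hkj (1/2) (Or.inr rfl)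
    have hCi : Cint = {x : EuclideanSpace ℝ (Fin (2*m+1)) |
        (∀ i ∈ I, x i = u i) ∧ (∀ i ∈ S, |x i - u i| = 1/2) ∧ x j = c₀} := by
      rw [hCint]
      ext x
      simp only [Set.mem_setOf_eq]
      constructor
      · rintro ⟨h1, h2, ⟨a, ha⟩, h4⟩
        exact ⟨h1, h2, hc₀u (x j) ⟨a, by rw [ha]; ring⟩ h4⟩
      · rintro ⟨h1, h2, h3⟩
        exact ⟨h1, h2, ⟨n₀, by rw [h3, hc₀n]; ring⟩, by rw [h3]; exact hc₀d⟩
    have hCh : Chalf = {x : EuclideanSpace ℝ (Fin (2*m+1)) |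
        (∀ i ∈ S, x i = u i) ∧ (∀ i ∈ I, |x i - u i| = 1/2) ∧ x j = c₁} := by
      rw [hChalf]
      ext x
      simp only [Set.mem_setOf_eq]
      constructor
      · rintro ⟨h1, h2, ⟨a, ha⟩, h4⟩
        exact ⟨h1, h2, hc₁u (x j) ⟨a, ha⟩ h4⟩
      · rintro ⟨h1, h2, h3⟩
        exact ⟨h1, h2, ⟨n₁, by rw [h3, hc₁n]⟩, by rw [h3]; exact hc₁d⟩
    have hci : Cint.ncard = 2^m := by
      rw [hCi]; exact stmt4_card_piece j S I hSI hS hU u c₀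
    have hch : Chalf.ncard = 2^m := by
      rw [hCh]; exact stmt4_card_piece j I S hSI.symm hI hU' u c₁
    have hdisj : Disjoint Cint Chalf := by
      rw [hCint, hChalf]
      rw [Set.disjoint_left]
      rintro x ⟨_, _, ⟨a, ha⟩, _⟩ ⟨_, _, ⟨b, hb⟩, _⟩
      exact stmt4_int_ne_half' a b (by rw [← ha, hb])
    have hfin1 : Cint.Finite :=
      Set.finite_of_ncard_ne_zero (by rw [hci]; exact pow_ne_zero m two_ne_zero)
    have hfin2 : Chalf.Finite :=
      Set.finite_of_ncard_ne_zero (by rw [hch]; exact pow_ne_zero m two_ne_zero)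
    rw [Set.ncard_union_eq hdisj hfin1 hfin2, hci, hch, pow_succ]
    ring
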